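/- Consider the closed-loop system of the microgrid incremental pH model with no constant-power loads, i.e., P = 0, so that R̃(z̃) = blockdiag(R_G + R_D, R_E, G) is constant in z̃. Let x̃ : [0,∞) → ℝⁿ and x̃_c : [0,∞) → ℝ^{nG} be differentiable and satisfy x̃'(t) = (J − R̃)·Q·x̃(t) + g·ũ(t) and x̃_c'(t) = −k_I·𝓛·ũ_c(t), where ỹ = gᵀQx̃, ỹ_c = −𝓛x̃_c, ũ = −rỹ − w⁻¹ỹ_c, ũ_c = (w⁻¹)ᵀỹ, with 𝓛 symmetric and w invertible. If the symmetric part of R_D + r is positive semidefinite, then for every initial condition (no restriction to any domain) the total storage H_t(t) = ½x̃(ت)ᵀQx̃(t) + ½x̃_c(t)ᵀk_I⁻¹x̃_c(t) is nonincreasing on [0,∞) and every trajectory remains bounded. -/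

import Mathlib

open Matrix

/-- Index type of the microgrid state: generator currents, line currents, bus charges. -/
abbrev BIdx (nG nE nN : ℕ) := Fin nG ⊕ (Fin nE ⊕ Fin nN)

/-- The input matrix `g = [I; 0; 0]`. -/
noncomputable def gMat (nG nE nN : ℕ) : Matrix (BIdx nG nE nN) (Fin nG) ℝ :=
  Matrix.of fun i j =>
    match i with
    | Sum.inl i' => if i' = j then (1 : ℝ) else 0
    | Sum.inr _ => 0

/-- Block-diagonal matrix with three diagonal blocks. -/
noncomputable def bd3 {nG nE nN : ℕ} (A : Matrix (Fin nG) (Fin nG) ℝ)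
    (B : Matrix (Fin nE) (Fin nE) ℝ) (D : Matrix (Fin nN) (Fin nN) ℝ) :
    Matrix (BIdx nG nE nN) (BIdx nG nE nN) ℝ :=
  Matrix.fromBlocks A 0 0 (Matrix.fromBlocks B 0 0 D)

/-- `G_P(q̃) = diag (P_k C_k² / (q̄_k (q̃_k + q̄_k)))`. -/
noncomputable def GPm {nN : ℕ} (P cD qbar : Fin nN → ℝ) (qt : Fin nN → ℝ) :
    Matrix (Fin nN) (Fin nN) ℝ :=
  Matrix.diagonal fun k => P k * (cD k) ^ 2 / (qbar k * (qt k + qbar k))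

/-- The state-dependent dissipation matrix
`R̃(z̃) = blockdiag(R_G + R_D, R_E, G − G_P(q̃))` of the incremental microgrid model. -/
noncomputable def Rtil {nG nE nN : ℕ} (rG rD : Fin nG → ℝ) (rE : Fin nE → ℝ)
    (gD cD P qbar : Fin nN → ℝ) (z : BIdx nG nE nN → ℝ) :
    Matrix (BIdx nG nE nN) (BIdx nG nE nN) ℝ :=
  bd3 (Matrix.diagonal fun i => rG i + rD i) (Matrix.diagonal rE)
    (Matrix.diagonal gD - GPm P cD qbar fun k => z (Sum.inr (Sum.inr k)))


section Auxiliary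

lemma quad_hasDerivAt {ι : Type*} [Fintype ι] (A : Matrix ι ι ℝ)
    {f : ℝ → ι → ℝ} {f' : ι → ℝ} {t : ℝ} (hf : HasDerivAt f f' t) :
    HasDerivAt (fun s => f s ⬝ᵥ (A *ᵥ f s))
      (f' ⬝ᵥ (A *ᵥ f t) + f t ⬝ᵥ (A *ᵥ f')) t := by
  have hc : ∀ i, HasDerivAt (fun s => f s i) (f' i) t := fun i =>
    (hasDerivAt_pi.mp hf) i
  have h : HasDerivAt (fun s => ∑ i, f s i * ∑ j, A i j * f s j)
      (∑ i, (f' i * ∑ j, A i j * f t j + f t i * ∑ j, A i j * f' j)) t := by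
    refine HasDerivAt.fun_sum fun i _ => ?_
    exact (hc i).mul (HasDerivAt.fun_sum fun j _ => (hc j).const_mul (A i j))
  have hfun : (fun s => f s ⬝ᵥ (A *ᵥ f s)) = fun s => ∑ i, f s i * ∑ j, A i j * f s j := by
    funext s; simp [dotProduct, mulVec]
  have hval : f' ⬝ᵥ (A *ᵥ f t) + f t ⬝ᵥ (A *ᵥ f') =
      ∑ i, (f' i * ∑ j, A i j * f t j + f t i * ∑ j, A i j * f' j) := by
    simp [dotProduct, mulVec, Finset.sum_add_distrib]
  rw [hfun, hval]; exact h

lemma posdef_coercive {ι : Type*} [Fintype ι] [Nonempty ι]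
    (A : Matrix ι ι ℝ) (hA : ∀ v : ι → ℝ, v ≠ 0 → 0 < v ⬝ᵥ (A *ᵥ v)) :
    ∃ m : ℝ, 0 < m ∧ ∀ v : ι → ℝ, m * ‖v‖ ^ 2 ≤ v ⬝ᵥ (A *ᵥ v) := by
  have hcont : Continuous fun v : ι → ℝ => v ⬝ᵥ (A *ᵥ v) := by
    simp only [dotProduct, mulVec]
    exact continuous_finset_sum _ fun i _ => (continuous_apply i).mul
      (continuous_finset_sum _ fun j _ => continuous_const.mul (continuous_apply j))
  have hne : (Metric.sphere (0 : ι → ℝ) 1).Nonempty := by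
    refine ⟨fun _ => 1, ?_⟩
    simp [Metric.mem_sphere, dist_eq_norm, pi_norm_const]
  obtain ⟨v0, hv0S, hmin'⟩ := (isCompact_sphere (0 : ι → ℝ) 1).exists_isMinOn hne
    hcont.continuousOn
  have hv0 : v0 ≠ 0 := by
    intro h
    rw [Metric.mem_sphere, dist_eq_norm, h] at hv0S
    simp at hv0S
  refine ⟨v0 ⬝ᵥ (A *ᵥ v0), hA v0 hv0, fun v => ?_⟩
  rcases eq_or_ne v 0 with rfl | hv
  · simp
  · set c : ℝ := ‖v‖ with hc
    have hcpos : 0 < c := norm_pos_iff.mpr hv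
    set u : ι → ℝ := c⁻¹ • v with hu
    have huS : u ∈ Metric.sphere (0 : ι → ℝ) 1 := by
      simp [hu, Metric.mem_sphere, dist_eq_norm, norm_smul, abs_of_pos (inv_pos.mpr hcpos),
        inv_mul_cancel₀ hcpos.ne', abs_of_pos hcpos]
      exact inv_mul_cancel₀ hcpos.ne'
    have hscale : u ⬝ᵥ (A *ᵥ u) = c⁻¹ ^ 2 * (v ⬝ᵥ (A *ᵥ v)) := by
      simp [hu, mulVec_smul, smul_dotProduct, dotProduct_smul, smul_eq_mul]
      ring
    have hmin2 : v0 ⬝ᵥ (A *ᵥ v0) ≤ c⁻¹ ^ 2 * (v ⬝ᵥ (A *ᵥ v)) := by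
      have := hmin' huS
      simpa [hscale] using this
    have h2 : (v0 ⬝ᵥ (A *ᵥ v0)) * c ^ 2 ≤ v ⬝ᵥ (A *ᵥ v) := by
      have hc2 : (0:ℝ) < c ^ 2 := by positivity
      calc (v0 ⬝ᵥ (A *ᵥ v0)) * c ^ 2 ≤ (c⁻¹ ^ 2 * (v ⬝ᵥ (A *ᵥ v))) * c ^ 2 := by
            nlinarith [hmin2]
        _ = v ⬝ᵥ (A *ᵥ v) := by field_simp
    linarith [h2]

lemma dot_mulVec_left {ι κ : Type*} [Fintype ι] [Fintype κ] (A : Matrix ι κ ℝ)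
    (u : κ → ℝ) (v : ι → ℝ) : (A *ᵥ u) ⬝ᵥ v = u ⬝ᵥ (Aᵀ *ᵥ v) := by
  rw [dotProduct_comm, dotProduct_mulVec, dotProduct_comm]
  congr 1
  rw [← Matrix.mulVec_transpose]

lemma gT_mulVec_apply {nG nE nN : ℕ} (z : BIdx nG nE nN → ℝ) (i : Fin nG) :
    ((gMat nG nE nN)ᵀ *ᵥ z) i = z (Sum.inl i) := by
  simp [gMat, mulVec, dotProduct, Fintype.sum_sum_type]

lemma bd3_quad {nG nE nN : ℕ} (rG rD : Fin nG → ℝ) (rE : Fin nE → ℝ) (gD : Fin nN → ℝ)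
    (z : BIdx nG nE nN → ℝ) :
    ((bd3 (Matrix.diagonal fun i => rG i + rD i) (Matrix.diagonal rE)
        (Matrix.diagonal gD)) *ᵥ z) ⬝ᵥ z =
      (∑ i, (rG i + rD i) * z (Sum.inl i) ^ 2) +
      ((∑ j, rE j * z (Sum.inr (Sum.inl j)) ^ 2) +
       (∑ k, gD k * z (Sum.inr (Sum.inr k)) ^ 2)) := by
  simp [bd3, dotProduct, mulVec, Fintype.sum_sum_type, Matrix.fromBlocks, Matrix.diagonal,
    Finset.sum_ite_eq, sq, add_mul, mul_add, mul_comm, mul_left_comm]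

lemma diag_quad {nG : ℕ} (rD : Fin nG → ℝ) (y : Fin nG → ℝ) :
    y ⬝ᵥ ((Matrix.diagonal rD) *ᵥ y) = ∑ i, rD i * y i ^ 2 := by
  simp [dotProduct, mulVec, Matrix.diagonal, Finset.sum_ite_eq, sq, mul_comm, mul_left_comm]

/-- The core dissipation-inequality computation: the candidate derivative of the
total storage along the closed loop is nonpositive. -/
lemma dissipation_nonpos {nG nE nN : ℕ}
    (rG rD : Fin nG → ℝ) (rE : Fin nE → ℝ) (gD : Fin nN → ℝ)
    (hrG : ∀ i, 0 < rG i) (hrE : ∀ j, 0 < rE j) (hgD : ∀ k, 0 ≤ gD k)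
    (Q J : Matrix (BIdx nG nE nN) (BIdx nG nE nN) ℝ) (hQT : Qᵀ = Q) (hJ : Jᵀ = -J)
    (kd : Fin nG → ℝ) (hkd : ∀ i, 0 < kd i)
    (L r w : Matrix (Fin nG) (Fin nG) ℝ) (hLT : Lᵀ = L)
    (hpsd : ∀ v : Fin nG → ℝ, 0 ≤ v ⬝ᵥ ((Matrix.diagonal rD + r) *ᵥ v))
    (x : BIdx nG nE nN → ℝ) (c : Fin nG → ℝ) :
    (1 / 2 : ℝ) *
      (((J - bd3 (Matrix.diagonal fun i => rG i + rD i) (Matrix.diagonal rE)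
          (Matrix.diagonal gD)) *ᵥ (Q *ᵥ x) +
        gMat nG nE nN *ᵥ
          (-(r *ᵥ ((gMat nG nE nN)ᵀ *ᵥ (Q *ᵥ x))) - w⁻¹ *ᵥ (-(L *ᵥ c)))) ⬝ᵥ (Q *ᵥ x) +
       x ⬝ᵥ (Q *ᵥ
        ((J - bd3 (Matrix.diagonal fun i => rG i + rD i) (Matrix.diagonal rE)
          (Matrix.diagonal gD)) *ᵥ (Q *ᵥ x) +
        gMat nG nE nN *ᵥ
          (-(r *ᵥ ((gMat nG nE nN)ᵀ *ᵥ (Q *ᵥ x))) - w⁻¹ *ᵥ (-(L *ᵥ c)))))) +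
    (1 / 2 : ℝ) *
      ((-((Matrix.diagonal kd * L) *ᵥ ((w⁻¹)ᵀ *ᵥ ((gMat nG nE nN)ᵀ *ᵥ (Q *ᵥ x))))) ⬝ᵥ
          ((Matrix.diagonal kd)⁻¹ *ᵥ c) +
       c ⬝ᵥ ((Matrix.diagonal kd)⁻¹ *ᵥ
        (-((Matrix.diagonal kd * L) *ᵥ ((w⁻¹)ᵀ *ᵥ ((gMat nG nE nN)ᵀ *ᵥ (Q *ᵥ x))))))) ≤ 0 := by
  classical
  set R : Matrix (BIdx nG nE nN) (BIdx nG nE nN) ℝ :=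
    bd3 (Matrix.diagonal fun i => rG i + rD i) (Matrix.diagonal rE) (Matrix.diagonal gD)
    with hRdef
  set K : Matrix (Fin nG) (Fin nG) ℝ := Matrix.diagonal kd with hKdef
  set z : BIdx nG nE nN → ℝ := Q *ᵥ x with hz
  set y : Fin nG → ℝ := (gMat nG nE nN)ᵀ *ᵥ z with hy
  set x' : BIdx nG nE nN → ℝ :=
    (J - R) *ᵥ z + gMat nG nE nN *ᵥ (-(r *ᵥ y) - w⁻¹ *ᵥ (-(L *ᵥ c))) with hx'
  set c' : Fin nG → ℝ := -((K * L) *ᵥ ((w⁻¹)ᵀ *ᵥ y)) with hc'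
  have hKdet : IsUnit K.det := by
    rw [hKdef, Matrix.det_diagonal]
    exact isUnit_iff_ne_zero.mpr (Finset.prod_pos (fun i _ => hkd i)).ne'
  have hKinv : K⁻¹ = Matrix.diagonal fun i => (kd i)⁻¹ := by
    apply Matrix.inv_eq_right_inv
    rw [hKdef, Matrix.diagonal_mul_diagonal]
    have h1 : (fun i => kd i * (kd i)⁻¹) = fun _ : Fin nG => (1 : ℝ) := by
      funext i
      exact mul_inv_cancel₀ (hkd i).ne'
    rw [h1, Matrix.diagonal_one]
  have hKinvT : (K⁻¹)ᵀ = K⁻¹ := by rw [hKinv, Matrix.diagonal_transpose]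
  -- symmetrize the two cross terms
  have hsym1 : x ⬝ᵥ (Q *ᵥ x') = x' ⬝ᵥ z := by
    rw [dotProduct_comm, dot_mulVec_left, hQT]
  have hsym2 : c ⬝ᵥ (K⁻¹ *ᵥ c') = c' ⬝ᵥ (K⁻¹ *ᵥ c) := by
    rw [dotProduct_comm, dot_mulVec_left, hKinvT]
  -- the skew term vanishes
  have hJz : (J *ᵥ z) ⬝ᵥ z = 0 := by
    have h : (J *ᵥ z) ⬝ᵥ z = -(z ⬝ᵥ (J *ᵥ z)) := by
      rw [dot_mulVec_left, hJ, Matrix.neg_mulVec, dotProduct_neg]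
    have h2 : z ⬝ᵥ (J *ᵥ z) = (J *ᵥ z) ⬝ᵥ z := dotProduct_comm _ _
    linarith
  -- value of the first quadratic-form piece
  have hxz : x' ⬝ᵥ z =
      -((R *ᵥ z) ⬝ᵥ z) - (r *ᵥ y) ⬝ᵥ y + (w⁻¹ *ᵥ (L *ᵥ c)) ⬝ᵥ y := by
    rw [hx', add_dotProduct, Matrix.sub_mulVec, sub_dotProduct, hJz,
      dot_mulVec_left (gMat nG nE nN), ← hy, sub_dotProduct, neg_dotProduct,
      Matrix.mulVec_neg, neg_dotProduct]
    ring
  -- value of the controller piece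
  have hB : c' ⬝ᵥ (K⁻¹ *ᵥ c) = -((w⁻¹ *ᵥ (L *ᵥ c)) ⬝ᵥ y) := by
    have hKLT : (K * L)ᵀ = L * K := by
      rw [Matrix.transpose_mul, hLT, hKdef, Matrix.diagonal_transpose]
    have hLKK : (L * K) *ᵥ (K⁻¹ *ᵥ c) = L *ᵥ c := by
      rw [Matrix.mulVec_mulVec, Matrix.mul_assoc, Matrix.mul_nonsing_inv K hKdet,
        Matrix.mul_one]
    rw [hc', neg_dotProduct, dot_mulVec_left, hKLT, hLKK,
      dot_mulVec_left ((w⁻¹)ᵀ), Matrix.transpose_transpose, dotProduct_comm]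
  -- key sign fact
  have hyz : ∀ i, y i = z (Sum.inl i) := fun i => by rw [hy]; exact gT_mulVec_apply z i
  have hkey : 0 ≤ (R *ᵥ z) ⬝ᵥ z + (r *ᵥ y) ⬝ᵥ y := by
    have h1 : (R *ᵥ z) ⬝ᵥ z =
        (∑ i, (rG i + rD i) * z (Sum.inl i) ^ 2) +
        ((∑ j, rE j * z (Sum.inr (Sum.inl j)) ^ 2) +
         (∑ k, gD k * z (Sum.inr (Sum.inr k)) ^ 2)) := by
      rw [hRdef]; exact bd3_quad rG rD rE gD z
    have hps := hpsd y
    rw [Matrix.add_mulVec, dotProduct_add, diag_quad] at hps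
    have h3 : (r *ᵥ y) ⬝ᵥ y = y ⬝ᵥ (r *ᵥ y) := dotProduct_comm _ _
    have hsplit : (∑ i, (rG i + rD i) * z (Sum.inl i) ^ 2) =
        (∑ i, rG i * y i ^ 2) + (∑ i, rD i * y i ^ 2) := by
      rw [← Finset.sum_add_distrib]
      refine Finset.sum_congr rfl fun i _ => ?_
      rw [hyz i]; ring
    have hnn1 : 0 ≤ ∑ i, rG i * y i ^ 2 :=
      Finset.sum_nonneg fun i _ => mul_nonneg (hrG i).le (sq_nonneg _)
    have hnn2 : 0 ≤ ∑ j, rE j * z (Sum.inr (Sum.inl j)) ^ 2 :=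
      Finset.sum_nonneg fun j _ => mul_nonneg (hrE j).le (sq_nonneg _)
    have hnn3 : 0 ≤ ∑ k, gD k * z (Sum.inr (Sum.inr k)) ^ 2 :=
      Finset.sum_nonneg fun k _ => mul_nonneg (hgD k) (sq_nonneg _)
    rw [h1, hsplit, h3]
    linarith
  -- conclude
  rw [hsym1, hsym2, hxz, hB]
  linarith

end Auxiliary

/-- **Corollary 1.** Without constant-power loads (`P = 0`) the dissipation
matrix is the constant `R̃ = blockdiag(R_G + R_D, R_E, G)`; if the symmetric part of
`R_D + r` is positive semidefinite, then—globally, with no domain restriction—the total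
storage is nonincreasing on `[0,∞)` and every closed-loop trajectory remains bounded. -/
theorem global_storage_nonincreasing_no_CPL
    (nG nE nN : ℕ) (hnG : 0 < nG) (hnE : 0 < nE) (hnN : 0 < nN)
    (rG rD : Fin nG → ℝ) (rE : Fin nE → ℝ) (gD : Fin nN → ℝ)
    (hrG : ∀ i, 0 < rG i) (hrD : ∀ i, 0 < rD i) (hrE : ∀ j, 0 < rE j)
    (hgD : ∀ k, 0 ≤ gD k)
    (Q : Matrix (BIdx nG nE nN) (BIdx nG nE nN) ℝ) (hQsymm : Q.IsSymm) (hQpd : Q.PosDef)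
    (J : Matrix (BIdx nG nE nN) (BIdx nG nE nN) ℝ) (hJ : Jᵀ = -J)
    (kd : Fin nG → ℝ) (hkd : ∀ i, 0 < kd i)
    (L : Matrix (Fin nG) (Fin nG) ℝ) (hL : L.IsSymm)
    (r w : Matrix (Fin nG) (Fin nG) ℝ) (hw : IsUnit w.det)
    (xt : ℝ → (BIdx nG nE nN → ℝ)) (xc : ℝ → (Fin nG → ℝ))
    (hxdiff : ∀ t : ℝ, 0 ≤ t → HasDerivAt xt
      ((J - bd3 (Matrix.diagonal fun i => rG i + rD i) (Matrix.diagonal rE)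
          (Matrix.diagonal gD)) *ᵥ (Q *ᵥ xt t) +
        gMat nG nE nN *ᵥ
          (-(r *ᵥ ((gMat nG nE nN)ᵀ *ᵥ (Q *ᵥ xt t))) - w⁻¹ *ᵥ (-(L *ᵥ xc t)))) t)
    (hxcdiff : ∀ t : ℝ, 0 ≤ t → HasDerivAt xc
      (-((Matrix.diagonal kd * L) *ᵥ ((w⁻¹)ᵀ *ᵥ ((gMat nG nE nN)ᵀ *ᵥ (Q *ᵥ xt t))))) t)
    (hpsd : ∀ v : Fin nG → ℝ, 0 ≤ v ⬝ᵥ ((Matrix.diagonal rD + r) *ᵥ v)) :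
    AntitoneOn (fun t => (1 / 2 : ℝ) * ((xt t) ⬝ᵥ (Q *ᵥ xt t)) +
        (1 / 2 : ℝ) * ((xc t) ⬝ᵥ ((Matrix.diagonal kd)⁻¹ *ᵥ xc t))) (Set.Ici 0) ∧
    (∃ M : ℝ, ∀ t : ℝ, 0 ≤ t → ‖xt t‖ ≤ M ∧ ‖xc t‖ ≤ M)  := by
  classical
  have hFinNe : Nonempty (Fin nG) := ⟨⟨0, hnG⟩⟩
  have hBNe : Nonempty (BIdx nG nE nN) := ⟨Sum.inl ⟨0, hnG⟩⟩
  set F : ℝ → ℝ := fun t => (1 / 2 : ℝ) * ((xt t) ⬝ᵥ (Q *ᵥ xt t)) +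
      (1 / 2 : ℝ) * ((xc t) ⬝ᵥ ((Matrix.diagonal kd)⁻¹ *ᵥ xc t)) with hF
  have main : ∀ t : ℝ, 0 ≤ t → ∃ d : ℝ, HasDerivAt F d t ∧ d ≤ 0 := by
    intro t ht
    have h1 := quad_hasDerivAt Q (hxdiff t ht)
    have h2 := quad_hasDerivAt ((Matrix.diagonal kd)⁻¹) (hxcdiff t ht)
    refine ⟨_, (h1.const_mul (1 / 2 : ℝ)).add (h2.const_mul (1 / 2 : ℝ)), ?_⟩
    exact dissipation_nonpos rG rD rE gD hrG hrE hgD Q J hQsymm hJ kd hkd L r w hL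
      hpsd (xt t) (xc t)
  have hant : AntitoneOn F (Set.Ici (0 : ℝ)) := by
    refine antitoneOn_of_deriv_nonpos (convex_Ici 0) ?_ ?_ ?_
    · intro t ht
      obtain ⟨d, hd, _⟩ := main t ht
      exact hd.continuousAt.continuousWithinAt
    · intro t ht
      rw [interior_Ici] at ht
      obtain ⟨d, hd, _⟩ := main t ht.le
      exact hd.differentiableAt.differentiableWithinAt
    · intro t ht
      rw [interior_Ici] at ht
      obtain ⟨d, hd, hd0⟩ := main t ht.le
      rw [hd.deriv]
      exact hd0
  refine ⟨hant, ?_⟩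
  -- coercivity of the two quadratic forms
  obtain ⟨mQ, hmQ, hQle⟩ := posdef_coercive Q (fun v hv => by simpa using hQpd.dotProduct_mulVec_pos hv)
  have hKinv : (Matrix.diagonal kd)⁻¹ = Matrix.diagonal fun i => (kd i)⁻¹ := by
    apply Matrix.inv_eq_right_inv
    rw [Matrix.diagonal_mul_diagonal]
    have h1 : (fun i => kd i * (kd i)⁻¹) = fun _ : Fin nG => (1 : ℝ) := by
      funext i
      exact mul_inv_cancel₀ (hkd i).ne'
    rw [h1, Matrix.diagonal_one]
  have hKpd : (Matrix.diagonal fun i => (kd i)⁻¹ :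
      Matrix (Fin nG) (Fin nG) ℝ).PosDef :=
    Matrix.posDef_diagonal_iff.mpr fun i => inv_pos.mpr (hkd i)
  obtain ⟨mK, hmK, hKle⟩ := posdef_coercive ((Matrix.diagonal kd)⁻¹)
    (fun v hv => by rw [hKinv]; simpa using hKpd.dotProduct_mulVec_pos hv)
  refine ⟨Real.sqrt (2 * F 0 / mQ) + Real.sqrt (2 * F 0 / mK), fun t ht => ?_⟩
  have hFt : F t ≤ F 0 := hant Set.self_mem_Ici ht ht
  have ha : mQ * ‖xt t‖ ^ 2 ≤ xt t ⬝ᵥ (Q *ᵥ xt t) := hQle (xt t)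
  have hb : mK * ‖xc t‖ ^ 2 ≤ xc t ⬝ᵥ ((Matrix.diagonal kd)⁻¹ *ᵥ xc t) := hKle (xc t)
  have ha0 : (0 : ℝ) ≤ mQ * ‖xt t‖ ^ 2 := by positivity
  have hb0 : (0 : ℝ) ≤ mK * ‖xc t‖ ^ 2 := by positivity
  have hFtval : ∀ s : ℝ, F s = (1 / 2 : ℝ) * (xt s ⬝ᵥ (Q *ᵥ xt s)) +
      (1 / 2 : ℝ) * (xc s ⬝ᵥ ((Matrix.diagonal kd)⁻¹ *ᵥ xc s)) := fun s => rfl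
  have ha' : (0 : ℝ) ≤ xt 0 ⬝ᵥ (Q *ᵥ xt 0) := le_trans (by positivity) (hQle (xt 0))
  have hb' : (0 : ℝ) ≤ xc 0 ⬝ᵥ ((Matrix.diagonal kd)⁻¹ *ᵥ xc 0) :=
    le_trans (by positivity) (hKle (xc 0))
  have hF0 : (0 : ℝ) ≤ F 0 := by rw [hFtval 0]; linarith
  rw [hFtval t, hFtval 0] at hFt
  have hxtb : ‖xt t‖ ≤ Real.sqrt (2 * F 0 / mQ) := by
    rw [Real.le_sqrt (norm_nonneg _) (div_nonneg (by linarith) hmQ.le)]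
    rw [le_div_iff₀ hmQ, hFtval 0]
    linarith [hFt, ha, hb, ha0, hb0]
  have hxcb : ‖xc t‖ ≤ Real.sqrt (2 * F 0 / mK) := by
    rw [Real.le_sqrt (norm_nonneg _) (div_nonneg (by linarith) hmK.le)]
    rw [le_div_iff₀ hmK, hFtval 0]
    linarith [hFt, ha, hb, ha0, hb0]
  constructor
  · exact hxtb.trans (le_add_of_nonneg_right (Real.sqrt_nonneg _))
  · exact hxcb.trans (le_add_of_nonneg_left (Real.sqrt_nonneg _))
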